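/- Let μ be a measure on ℝ with μ((c, c+δ]) < ∞ for some δ > 0, let c ∈ ℝ, L ≥ 0, and let Δ : (0, ∞) → [0, ∞) satisfy Δ(h) → 0 and Δ(h)/h → L as h → 0⁺. Then (1/h)·∫₀^{Δ(h)} μ((c, c + y]) dy → 0 as h → 0⁺. -/

import Mathlib

open MeasureTheory Filter Set

/-- upward band estimate in the level-crossing analysis: if
`μ((c, c+δ]) < ∞` for some `δ > 0`, `Δ(h) → 0` and `Δ(h)/h → L ≥ 0` as
`h → 0⁺`, then `(1/h) ∫₀^{Δ(h)} μ((c, c+y]) dy → 0` as `h → 0⁺`. -/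
theorem stmt_3 (μ : Measure ℝ) (c : ℝ) (hμ : ∃ δ > 0, μ (Ioc c (c + δ)) < ⊤)
    (L : ℝ) (hL : 0 ≤ L) (Δ : ℝ → ℝ) (hΔ : ∀ h > 0, 0 ≤ Δ h)
    (hΔ0 : Tendsto Δ (nhdsWithin 0 (Ioi 0)) (nhds 0))
    (hΔL : Tendsto (fun h => Δ h / h) (nhdsWithin 0 (Ioi 0)) (nhds L)) :
    Tendsto (fun h => (1 / h) * ∫ y in (0 : ℝ)..(Δ h), (μ (Ioc c (c + y))).toReal)
      (nhdsWithin 0 (Ioi 0)) (nhds 0) := by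
  obtain ⟨δ, hδ, hfin⟩ := hμ
  set g : ℝ → ℝ := fun y => (μ (Ioc c (c + y))).toReal with hg
  -- monotone on Icc 0 δ
  have hmono : MonotoneOn g (Icc 0 δ) := by
    intro y hy z hz hyz
    have hsub : Ioc c (c + y) ⊆ Ioc c (c + z) := Ioc_subset_Ioc le_rfl (by linarith)
    have hzfin : μ (Ioc c (c + z)) ≠ ⊤ :=
      ne_top_of_le_ne_top hfin.ne (measure_mono (Ioc_subset_Ioc le_rfl (by linarith [hz.2])))
    exact ENNReal.toReal_le_toReal (ne_top_of_le_ne_top hzfin (measure_mono hsub)) hzfin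
      |>.mpr (measure_mono hsub)
  have hgnonneg : ∀ y, 0 ≤ g y := fun y => ENNReal.toReal_nonneg
  -- μ (Ioc c (c+y)) → 0 as y → 0⁺
  have hmeas : Tendsto (fun y => μ (Ioc c (c + y))) (nhdsWithin 0 (Ioi 0)) (nhds 0) := by
    have := tendsto_measure_biInter_gt (μ := μ) (s := fun y : ℝ => Ioc c (c + y)) (a := 0)
      (fun r _ => measurableSet_Ioc.nullMeasurableSet)
      (fun i j _ hij => Ioc_subset_Ioc le_rfl (by linarith))
      ⟨δ, hδ, hfin.ne⟩
    have hempty : (⋂ r > (0:ℝ), Ioc c (c + r)) = ∅ := by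
      apply eq_empty_iff_forall_notMem.mpr
      intro x hx
      simp only [mem_iInter, mem_Ioc] at hx
      by_cases hc : c < x
      · have := hx ((x - c) / 2) (by linarith)
        linarith [this.2]
      · exact hc (hx 1 one_pos).1
    rw [hempty] at this
    simpa [Function.comp_def] using this
  have hg0 : Tendsto g (nhdsWithin 0 (Ici 0)) (nhds 0) := by
    have h1 : Tendsto g (nhdsWithin 0 (Ioi 0)) (nhds 0) := by
      have := (ENNReal.tendsto_toReal (by simp)).comp hmeas
      simpa [Function.comp_def] using this
    have h2 : Tendsto g (nhdsWithin 0 ({0} : Set ℝ)) (nhds 0) := by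
      rw [nhdsWithin_singleton]
      have hg0' : g 0 = 0 := by simp [hg]
      simpa [hg0'] using tendsto_pure_nhds g 0
    have : nhdsWithin (0:ℝ) (Ici 0) = nhdsWithin 0 ({0} ∪ Ioi 0) := by
      congr 1
      ext x; simp [le_iff_lt_or_eq, or_comm, eq_comm]
    rw [this, nhdsWithin_union]
    exact Tendsto.sup h2 h1
  have hΔ0' : Tendsto Δ (nhdsWithin 0 (Ioi 0)) (nhdsWithin 0 (Ici 0)) := by
    apply tendsto_nhdsWithin_iff.mpr
    exact ⟨hΔ0, eventually_nhdsWithin_of_forall fun h hh => hΔ h hh⟩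
  have hgΔ : Tendsto (fun h => g (Δ h)) (nhdsWithin 0 (Ioi 0)) (nhds 0) := hg0.comp hΔ0'
  -- RHS tendsto
  have hRHS : Tendsto (fun h => (Δ h / h) * g (Δ h)) (nhdsWithin 0 (Ioi 0)) (nhds 0) := by
    have := hΔL.mul hgΔ
    simpa using this
  -- eventually bounds
  have hev : ∀ᶠ h in nhdsWithin 0 (Ioi 0),
      0 ≤ (1 / h) * ∫ y in (0:ℝ)..(Δ h), g y ∧
      (1 / h) * ∫ y in (0:ℝ)..(Δ h), g y ≤ (Δ h / h) * g (Δ h) := by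
    filter_upwards [self_mem_nhdsWithin, hΔ0.eventually (eventually_lt_nhds hδ)]
      with h hh hΔδ
    have hh0 : (0:ℝ) < h := hh
    have hΔnn : 0 ≤ Δ h := hΔ h hh0
    have hsub : Icc 0 (Δ h) ⊆ Icc 0 δ := Icc_subset_Icc le_rfl hΔδ.le
    have huIcc : uIcc (0:ℝ) (Δ h) = Icc 0 (Δ h) := uIcc_of_le hΔnn
    have hint : IntervalIntegrable g volume 0 (Δ h) := by
      apply MonotoneOn.intervalIntegrable
      rw [huIcc]
      exact hmono.mono hsub
    have hnn : 0 ≤ ∫ y in (0:ℝ)..(Δ h), g y :=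
      intervalIntegral.integral_nonneg hΔnn fun y _ => hgnonneg y
    have hbound : (∫ y in (0:ℝ)..(Δ h), g y) ≤ Δ h * g (Δ h) := by
      have : (∫ y in (0:ℝ)..(Δ h), g y) ≤ ∫ _ in (0:ℝ)..(Δ h), g (Δ h) := by
        apply intervalIntegral.integral_mono_on hΔnn hint (intervalIntegrable_const)
        intro y hy
        exact hmono (hsub hy) ⟨hΔnn, hΔδ.le⟩ hy.2
      simpa using this
    constructor
    · positivity
    · calc (1 / h) * ∫ y in (0:ℝ)..(Δ h), g y ≤ (1 / h) * (Δ h * g (Δ h)) := by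
            apply mul_le_mul_of_nonneg_left hbound (by positivity)
        _ = (Δ h / h) * g (Δ h) := by ring
  exact tendsto_of_tendsto_of_tendsto_of_le_of_le'
    tendsto_const_nhds hRHS (hev.mono fun h hh => hh.1) (hev.mono fun h hh => hh.2)
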